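/- For natural numbers n ≥ 1 and m ≥ 1, the Wright function W(-n, m | z) is a polynomial in z; explicitly, W(-n, m | z) = (1/Γ(m)) · (d/dξ)^{m-1}[e^{ξ + zξⁿ}] evaluated at ξ = 0, i.e. the residue at ξ = 0 of e^{ξ + zξⁿ}/ξ^m. -/

import Mathlib

set_option autoImplicit false

/-- For natural numbers `n ≥ 1` and `m ≥ 1`, the Wright function `W(-n, m | z)`,
extended via the residue at `ξ = 0` of `e^{ξ + zξⁿ}/ξ^m`, i.e.
`(1/Γ(m)) (d/dξ)^{m-1} e^{ξ + zξⁿ} |_{ξ=0}`, is a polynomial in `z`. -/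
theorem wright_neg_int_polynomial (n m : ℕ) (hn : 1 ≤ n) (hm : 1 ≤ m) :
    ∃ p : Polynomial ℂ, ∀ z : ℂ,
      (Complex.Gamma (m : ℂ))⁻¹ *
        iteratedDeriv (m - 1) (fun ξ : ℂ => Complex.exp (ξ + z * ξ ^ n)) 0
      = p.eval z := by
  obtain ⟨P, hP⟩ : ∃ P : Polynomial (Polynomial ℂ), ∀ z ξ : ℂ,
      iteratedDeriv (m - 1) (fun t : ℂ => Complex.exp (t + z * t ^ n)) ξ
        = ((P.map (Polynomial.evalRingHom z)).eval ξ) * Complex.exp (ξ + z * ξ ^ n) := by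
    induction m - 1 with
    | zero => exact ⟨1, fun z ξ => by simp⟩
    | succ k ih =>
      obtain ⟨P, hP⟩ := ih
      refine ⟨P.derivative + P * (1 + Polynomial.C (Polynomial.C (n : ℂ) * Polynomial.X)
        * Polynomial.X ^ (n - 1)), fun z ξ => ?_⟩
      rw [iteratedDeriv_succ]
      have hfun : iteratedDeriv k (fun t : ℂ => Complex.exp (t + z * t ^ n))
          = fun ξ : ℂ => ((P.map (Polynomial.evalRingHom z)).eval ξ)
              * Complex.exp (ξ + z * ξ ^ n) := funext (hP z)
      rw [hfun]
      have h1 : HasDerivAt (fun ξ : ℂ => (P.map (Polynomial.evalRingHom z)).eval ξ)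
          ((P.map (Polynomial.evalRingHom z)).derivative.eval ξ) ξ :=
        (P.map (Polynomial.evalRingHom z)).hasDerivAt ξ
      have hg : HasDerivAt (fun ξ : ℂ => ξ + z * ξ ^ n)
          (1 + z * ((n : ℂ) * ξ ^ (n - 1))) ξ :=
        (hasDerivAt_id ξ).add ((hasDerivAt_pow n ξ).const_mul z)
      have h2 : HasDerivAt (fun ξ : ℂ => Complex.exp (ξ + z * ξ ^ n))
          (Complex.exp (ξ + z * ξ ^ n) * (1 + z * ((n : ℂ) * ξ ^ (n - 1)))) ξ := hg.cexp
      rw [(h1.fun_mul h2).deriv]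
      simp only [Polynomial.derivative_map, Polynomial.map_add, Polynomial.map_mul,
        Polynomial.map_one, Polynomial.map_pow, Polynomial.map_C, Polynomial.map_X,
        Polynomial.eval_add, Polynomial.eval_mul, Polynomial.eval_one, Polynomial.eval_pow,
        Polynomial.eval_C, Polynomial.eval_X, Polynomial.coe_evalRingHom,
        Polynomial.eval_mul, Polynomial.eval_C, Polynomial.eval_X]
      ring
  refine ⟨Polynomial.C (Complex.Gamma (m : ℂ))⁻¹ * P.coeff 0, fun z => ?_⟩
  have h0 : (0 : ℂ) ^ n = 0 := zero_pow (by omega)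
  rw [hP z 0]
  simp [h0, Polynomial.eval_zero_map, Polynomial.coeff_zero_eq_eval_zero]
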